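/- For every K ≥ 1 there exist constants c, C > 0 such that for every δ ∈ (0, 1] and all ξ₁, ξ₂ ∈ ℝ with ξ := ξ₁ + ξ₂ and max(|ξ|, |ξ₁|, |ξ₂|) ≤ Kδ^{-1}, one has c·|ξξ₁ξ₂| ≤ |Ξ̃_δ(ξ, ξ₁, ξ₂)| ≤ C·|ξξ₁ξ₂|. -/

import Mathlib

open Real

/-- The Fourier multiplier of the scaled ILW dispersion operator:
`L_δ(ξ) = 6ξ² ∑_{k=1}^∞ 1/(k²π² + δ²ξ²)`. -/
noncomputable def Ldelta (δ ξ : ℝ) : ℝ :=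
  6 * ξ ^ 2 * ∑' k : ℕ, 1 / (((k : ℝ) + 1) ^ 2 * Real.pi ^ 2 + δ ^ 2 * ξ ^ 2)

/-- The dispersion symbol `p̃_δ(ξ) = ξ·L_δ(ξ)` of the scaled ILW. -/
noncomputable def ptilde (δ ξ : ℝ) : ℝ := ξ * Ldelta δ ξ

/-- The resonance function `Ξ̃_δ(ξ, ξ₁, ξ₂) = p̃_δ(ξ) − p̃_δ(ξ₁) − p̃_δ(ξ₂)`. -/
noncomputable def XiTilde (δ ξ ξ₁ ξ₂ : ℝ) : ℝ :=
  ptilde δ ξ - ptilde δ ξ₁ - ptilde δ ξ₂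

private lemma basel' : HasSum (fun n : ℕ => (1:ℝ) / ((n:ℝ)+1) ^ 2) (π ^ 2 / 6) := by
  have h := (hasSum_nat_add_iff' (f := fun n : ℕ => (1:ℝ) / (n:ℝ)^2) 1).2 hasSum_zeta_two
  simp at h
  convert h using 2 with n
  case e'_3 => rfl
  ring

private lemma summable_binv : Summable (fun k : ℕ => 1 / (((k : ℝ) + 1) ^ 2 * π ^ 2)) := by
  have : (fun k : ℕ => 1 / (((k : ℝ) + 1) ^ 2 * π ^ 2))
      = fun k : ℕ => (1 / π ^ 2) * (1 / ((k:ℝ)+1)^2) := by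
    funext k; rw [one_div_mul_one_div, mul_comm]
  rw [this]
  exact basel'.summable.mul_left _

private lemma summable_base (u : ℝ) (hu : 0 ≤ u) :
    Summable (fun k : ℕ => 1 / (((k : ℝ) + 1) ^ 2 * π ^ 2 + u)) := by
  apply Summable.of_nonneg_of_le (fun k => by positivity) _ summable_binv
  intro k
  apply one_div_le_one_div_of_le (by positivity)
  linarith

private lemma ptilde_eq (δ ξ : ℝ) :
    ptilde δ ξ = ∑' k : ℕ, (6 * ξ ^ 3) / (((k : ℝ) + 1) ^ 2 * π ^ 2 + δ ^ 2 * ξ ^ 2) := by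
  unfold ptilde Ldelta
  rw [← tsum_mul_left, ← tsum_mul_left]
  exact tsum_congr fun k => by ring
private lemma basel2 : HasSum (fun k : ℕ => 1 / (((k : ℝ) + 1) ^ 2 * π ^ 2)) (1/6) := by
  have h := basel'.mul_left (1/π^2)
  have hπ : (0:ℝ) < π ^ 2 := by positivity
  have e : (1/π^2) * (π^2/6) = (1:ℝ)/6 := by field_simp
  rw [e] at h
  convert h using 2 with k
  case e'_3 => rfl
  rw [one_div_mul_one_div, mul_comm]

private lemma w_bounds (B P u0 u1 u2 q : ℝ) (hB : 0 < B) (hP : 1 ≤ P)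
    (h0 : 0 ≤ u0) (h1 : 0 ≤ u1) (h2 : 0 ≤ u2)
    (g0 : B + u0 ≤ B*P) (g1 : B + u1 ≤ B*P) (g2 : B + u2 ≤ B*P)
    (hq : 0 ≤ q) (hq2 : 3*B + q ≤ 3*B*P) :
    3/(B*P^3) ≤ B*(3*B+q)/((B+u0)*(B+u1)*(B+u2)) ∧
    B*(3*B+q)/((B+u0)*(B+u1)*(B+u2)) ≤ 3*P/B := by
  have hP0 : (0:ℝ) < P := by linarith
  have d0 : 0 < B + u0 := by linarith
  have d1 : 0 < B + u1 := by linarith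
  have d2 : 0 < B + u2 := by linarith
  have hDpos : 0 < (B+u0)*(B+u1)*(B+u2) := by positivity
  constructor
  · rw [div_le_div_iff₀ (by positivity) hDpos]
    have hDup : (B+u0)*(B+u1)*(B+u2) ≤ (B*P)*(B*P)*(B*P) :=
      mul_le_mul (mul_le_mul g0 g1 d1.le (by positivity)) g2 d2.le (by positivity)
    have t1 : 3*((B+u0)*(B+u1)*(B+u2)) ≤ 3*((B*P)*(B*P)*(B*P)) := by linarith
    have t2 : B*(3*B)*(B*P^3) ≤ B*(3*B+q)*(B*P^3) :=
      mul_le_mul_of_nonneg_right (by nlinarith) (by positivity)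
    have t3 : 3*((B*P)*(B*P)*(B*P)) = B*(3*B)*(B*P^3) := by ring
    linarith
  · rw [div_le_div_iff₀ hDpos hB]
    have hDlow : B*B*B ≤ (B+u0)*(B+u1)*(B+u2) :=
      mul_le_mul (mul_le_mul (by linarith) (by linarith) hB.le d0.le)
        (by linarith) hB.le (by positivity)
    have t1 : B*B*(3*B+q) ≤ B*B*(3*B*P) :=
      mul_le_mul_of_nonneg_left hq2 (by positivity)
    have t2 : 3*P*(B*B*B) ≤ 3*P*((B+u0)*(B+u1)*(B+u2)) :=
      mul_le_mul_of_nonneg_left hDlow (by positivity)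
    nlinarith [t1, t2]

private lemma key_lemma (K δ ξ₁ ξ₂ : ℝ) (hK : 1 ≤ K) (hδ : 0 < δ)
    (h : max |ξ₁ + ξ₂| (max |ξ₁| |ξ₂|) ≤ K * δ⁻¹) :
    18/(π^2*(1+K^2/π^2)^3) * |(ξ₁ + ξ₂) * ξ₁ * ξ₂| ≤ |XiTilde δ (ξ₁ + ξ₂) ξ₁ ξ₂| ∧
    |XiTilde δ (ξ₁ + ξ₂) ξ₁ ξ₂| ≤ 3*(1+K^2/π^2) * |(ξ₁ + ξ₂) * ξ₁ * ξ₂| := by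
  have hπ : (0:ℝ) < π ^ 2 := by positivity
  obtain ⟨P, hPdef⟩ : ∃ P : ℝ, P = 1 + K^2/π^2 := ⟨_, rfl⟩
  rw [← hPdef]
  have hP1 : 1 ≤ P := by
    have h0 : 0 ≤ K^2/π^2 := by positivity
    rw [hPdef]; linarith
  have hP0 : (0:ℝ) < P := by linarith
  have hPmul : π^2*(P-1) = K^2 := by rw [hPdef]; field_simp; ring
  -- frequency bounds
  have key2 : ∀ x : ℝ, |x| ≤ K * δ⁻¹ → δ^2*x^2 ≤ K^2 := by
    intro x hx
    have h1 : δ * |x| ≤ δ * (K * δ⁻¹) := mul_le_mul_of_nonneg_left hx hδ.le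
    have h2 : δ * (K * δ⁻¹) = K := by field_simp
    have h3 : δ * |x| ≤ K := h2 ▸ h1
    have h4 : 0 ≤ δ * |x| := by positivity
    nlinarith [sq_abs x]
  have hb0 : δ^2*(ξ₁+ξ₂)^2 ≤ K^2 := key2 _ (le_trans (le_max_left _ _) h)
  have hb1 : δ^2*ξ₁^2 ≤ K^2 := key2 _ (le_trans (le_trans (le_max_left _ _) (le_max_right _ _)) h)
  have hb2 : δ^2*ξ₂^2 ≤ K^2 := key2 _ (le_trans (le_trans (le_max_right _ _) (le_max_right _ _)) h)
  obtain ⟨Q, hQdef⟩ : ∃ Q : ℝ, Q = ξ₁^2 + ξ₁*ξ₂ + ξ₂^2 := ⟨_, rfl⟩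
  have hQ : 0 ≤ Q := by
    rw [hQdef]; nlinarith [sq_nonneg (ξ₁+ξ₂), sq_nonneg ξ₁, sq_nonneg ξ₂]
  have hQK : δ^2*Q ≤ 3*K^2 := by
    rw [hQdef]; nlinarith [sq_nonneg (δ*(ξ₁-ξ₂))]
  obtain ⟨b, hbdef⟩ : ∃ b : ℕ → ℝ, b = fun k : ℕ => ((k:ℝ)+1)^2*π^2 := ⟨_, rfl⟩
  have hbpos : ∀ k, 0 < b k := by
    intro k; simp only [hbdef]; positivity
  have hbge : ∀ k, π^2 ≤ b k := by
    intro k; simp only [hbdef]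
    nlinarith [Nat.cast_nonneg (α := ℝ) k, sq_nonneg ((k:ℝ))]
  obtain ⟨w, hwdef⟩ : ∃ w : ℕ → ℝ, w = fun k : ℕ =>
      b k*(3*b k + δ^2*Q) /
        ((b k + δ^2*(ξ₁+ξ₂)^2) * (b k + δ^2*ξ₁^2) * (b k + δ^2*ξ₂^2)) := ⟨_, rfl⟩
  -- per-term bounds via w_bounds
  have hPm1 : 0 ≤ P - 1 := by linarith
  have hden : ∀ (x : ℝ), δ^2*x^2 ≤ K^2 → ∀ k, b k + δ^2*x^2 ≤ b k * P := by
    intro x hx k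
    have e1 : 0 ≤ (b k - π^2) * (P - 1) :=
      mul_nonneg (by linarith [hbge k]) hPm1
    nlinarith [e1, hPmul, hx]
  have hq2 : ∀ k, 3*(b k) + δ^2*Q ≤ 3*(b k)*P := by
    intro k
    have e1 : 0 ≤ (b k - π^2) * (P - 1) :=
      mul_nonneg (by linarith [hbge k]) hPm1
    nlinarith [e1, hPmul, hQK]
  have hwb : ∀ k, 3/(b k * P^3) ≤ w k ∧ w k ≤ 3*P/(b k) := by
    intro k
    simp only [hwdef]
    exact w_bounds (b k) P _ _ _ _ (hbpos k) hP1
      (by positivity) (by positivity) (by positivity)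
      (hden _ hb0 k) (hden _ hb1 k) (hden _ hb2 k)
      (mul_nonneg (sq_nonneg δ) hQ) (hq2 k)
  have hwlow : ∀ k, 3/(b k * P^3) ≤ w k := fun k => (hwb k).1
  have hwup : ∀ k, w k ≤ 3*P/(b k) := fun k => (hwb k).2
  have hwpos : ∀ k, 0 ≤ w k := by
    intro k
    have := hbpos k
    exact le_trans (by positivity) (hwlow k)
  -- summability
  have hsup_aux : Summable (fun k : ℕ => 3*P/(b k)) := by
    simp only [hbdef]
    have h1 := summable_binv.mul_left (3*P)
    convert h1 using 2 with k
    case e'_3 => rfl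
    rw [mul_one_div]
  have hsw : Summable w := Summable.of_nonneg_of_le hwpos hwup hsup_aux
  have hsumA : ∀ x : ℝ, Summable (fun k : ℕ => 6*x^3/(((k:ℝ)+1)^2*π^2 + δ^2*x^2)) := by
    intro x
    have h1 := (summable_base (δ^2*x^2) (by positivity)).mul_left (6*x^3)
    convert h1 using 2 with k
    case e'_3 => rfl
    rw [mul_one_div]
  -- the main identity
  have hXi : XiTilde δ (ξ₁+ξ₂) ξ₁ ξ₂ = (6*((ξ₁+ξ₂)*ξ₁*ξ₂)) * ∑' k, w k := by
    unfold XiTilde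
    rw [ptilde_eq, ptilde_eq, ptilde_eq]
    rw [← Summable.tsum_sub (hsumA (ξ₁+ξ₂)) (hsumA ξ₁),
        ← Summable.tsum_sub ((hsumA (ξ₁+ξ₂)).sub (hsumA ξ₁)) (hsumA ξ₂)]
    rw [← tsum_mul_left]
    apply tsum_congr
    intro k
    simp only [hwdef, hbdef, hQdef]
    have d0 : ((k:ℝ)+1)^2*π^2 + δ^2*(ξ₁+ξ₂)^2 ≠ 0 := by positivity
    have d1 : ((k:ℝ)+1)^2*π^2 + δ^2*ξ₁^2 ≠ 0 := by positivity
    have d2 : ((k:ℝ)+1)^2*π^2 + δ^2*ξ₂^2 ≠ 0 := by positivity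
    field_simp
    ring
  have htsumpos : 0 ≤ ∑' k, w k := tsum_nonneg hwpos
  have habs : |XiTilde δ (ξ₁+ξ₂) ξ₁ ξ₂| = 6*|(ξ₁+ξ₂)*ξ₁*ξ₂| * ∑' k, w k := by
    rw [hXi, abs_mul, abs_mul, abs_of_nonneg (by norm_num : (0:ℝ) ≤ 6),
      abs_of_nonneg htsumpos, mul_assoc]
  -- sum bounds
  have hSup : ∑' k, w k ≤ P/2 := by
    have h1 : ∑' k, w k ≤ ∑' k, 3*P/(b k) := Summable.tsum_le_tsum hwup hsw hsup_aux
    have h2 : ∑' k : ℕ, 3*P/(b k) = 3*P * (1/6) := by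
      simp only [hbdef]
      rw [← basel2.tsum_eq, ← tsum_mul_left]
      exact tsum_congr fun k => by rw [mul_one_div]
    rw [h2] at h1
    linarith
  have hSlow : 3/(π^2*P^3) ≤ ∑' k, w k := by
    have h1 : w 0 ≤ ∑' k, w k := Summable.le_tsum hsw 0 fun i _ => hwpos i
    have h2 : 3/(b 0 * P^3) ≤ w 0 := hwlow 0
    have h3 : b 0 = π^2 := by simp [hbdef]
    rw [h3] at h2
    linarith
  constructor
  · rw [habs]
    calc 18/(π^2*P^3) * |(ξ₁+ξ₂)*ξ₁*ξ₂| = 6*|(ξ₁+ξ₂)*ξ₁*ξ₂| * (3/(π^2*P^3)) := by ring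
    _ ≤ 6*|(ξ₁+ξ₂)*ξ₁*ξ₂| * ∑' k, w k :=
        mul_le_mul_of_nonneg_left hSlow (by positivity)
  · rw [habs]
    calc 6*|(ξ₁+ξ₂)*ξ₁*ξ₂| * ∑' k, w k ≤ 6*|(ξ₁+ξ₂)*ξ₁*ξ₂| * (P/2) :=
        mul_le_mul_of_nonneg_left hSup (by positivity)
    _ = 3*P * |(ξ₁+ξ₂)*ξ₁*ξ₂| := by ring

/-- For frequencies of size at most `Kδ⁻¹`, `|Ξ̃_δ|` is comparable to the KdV
resonance function `|ξξ₁ξ₂|`, uniformly in `δ ∈ (0,1]`. -/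
theorem XiTilde_comparable_KdV_low_freq (K : ℝ) (hK : 1 ≤ K) :
    ∃ c > 0, ∃ C > 0, ∀ δ ∈ Set.Ioc (0 : ℝ) 1, ∀ ξ₁ ξ₂ : ℝ,
      max |ξ₁ + ξ₂| (max |ξ₁| |ξ₂|) ≤ K * δ⁻¹ →
      c * |(ξ₁ + ξ₂) * ξ₁ * ξ₂| ≤ |XiTilde δ (ξ₁ + ξ₂) ξ₁ ξ₂| ∧
      |XiTilde δ (ξ₁ + ξ₂) ξ₁ ξ₂| ≤ C * |(ξ₁ + ξ₂) * ξ₁ * ξ₂| := by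

  have hπ : (0:ℝ) < π ^ 2 := by positivity
  refine ⟨18/(π^2*(1+K^2/π^2)^3), by positivity, 3*(1+K^2/π^2), by positivity,
    fun δ hδ ξ₁ ξ₂ hfreq => ?_⟩
  exact key_lemma K δ ξ₁ ξ₂ hK hδ.1 hfreq
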